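/- Let κ > 1, 0 < θ < 1/3, and u ∈ ℝ with |u| ≤ κ^θ. Then | e^{−iu/κ}/(1 − iu/κ) − (1 − u²/(2κ²)) | ≤ C₂ · |u|³/κ³, where C₂ = (1/(1−κ^{θ−1}))·(1/(1−κ^{θ−1}/4) + 5/2). -/

import Mathlib

open Real


/-- The constant `C₂(κ,θ)`. -/
noncomputable def C2 (κ θ : ℝ) : ℝ :=
  (1 / (1 - κ ^ (θ - 1))) * (1 / (1 - κ ^ (θ - 1) / 4) + 5 / 2)


/-- For `κ > 1`, `0 < θ < 1/3` and real `u` with `|u| ≤ κ^θ`,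
`|e^{−iu/κ}/(1 − iu/κ) − (1 − u²/(2κ²))| ≤ C₂ |u|³/κ³`. -/
theorem exp_over_one_sub_approx (κ θ u : ℝ) (hκ : 1 < κ) (hθ0 : 0 < θ) (hθ1 : θ < 1 / 3)
    (hu : |u| ≤ κ ^ θ) :
    ‖Complex.exp (-(Complex.I * u) / κ) / (1 - Complex.I * u / κ) -
        ((1 : ℂ) - (u : ℂ) ^ 2 / (2 * (κ : ℂ) ^ 2))‖ ≤
      C2 κ θ * |u| ^ (3 : ℕ) / κ ^ (3 : ℕ) := by
  have hκ0 : (0:ℝ) < κ := by linarith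
  have hκc : (κ:ℂ) ≠ 0 := by exact_mod_cast hκ0.ne'
  set z : ℂ := Complex.I * u / κ with hz
  have habsz : ‖z‖ = |u| / κ := by
    simp [hz, norm_div, Complex.norm_real, abs_of_pos hκ0]
  set r : ℝ := κ ^ (θ - 1) with hrdef
  have hr1 : r < 1 := Real.rpow_lt_one_of_one_lt_of_neg hκ (by linarith)
  have hr0 : 0 < r := Real.rpow_pos_of_pos hκ0 _
  have hzr : ‖z‖ ≤ r := by
    rw [habsz, div_le_iff₀ hκ0]
    calc |u| ≤ κ ^ θ := hu
      _ = r * κ := by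
        rw [hrdef, ← Real.rpow_add_one hκ0.ne']
        norm_num
  have hz1 : ‖z‖ < 1 := lt_of_le_of_lt hzr hr1
  have hab : 1 - r ≤ ‖1 - z‖ := by
    have h := norm_sub_norm_le (1:ℂ) z
    simp only [norm_one] at h
    linarith
  have h1zpos : (0:ℝ) < 1 - r := by linarith
  have h1z : (1:ℂ) - z ≠ 0 := by
    intro h
    rw [h] at hab; simp at hab; linarith
  -- exp bound
  have hE : ‖Complex.exp (-z) - (1 - z + z^2/2)‖ ≤
      ‖z‖ ^ 3 * (2/9) := by
    have h₁ : ‖-z‖ ≤ 1 := by rw [norm_neg]; exact hz1.le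
    have := Complex.exp_bound (x := -z) h₁ (n := 3) (by norm_num)
    have hsum : ∑ m ∈ Finset.range 3, (-z) ^ m / m.factorial = 1 - z + z^2/2 := by
      simp [Finset.sum_range_succ]
      ring
    rw [hsum] at this
    refine le_trans this (le_of_eq ?_)
    rw [norm_neg]
    norm_num [Nat.factorial]
  -- algebraic identity
  have hid : Complex.exp (-z) / (1 - z) - (1 + z^2/2) =
      ((Complex.exp (-z) - (1 - z + z^2/2)) + z^3/2) / (1 - z) := by
    field_simp
    ring
  have hrw1 : -(Complex.I * ↑u) / ↑κ = -z := by rw [hz]; ring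
  have hrw2 : ((1 : ℂ) - (u : ℂ) ^ 2 / (2 * (κ : ℂ) ^ 2)) = 1 + z^2/2 := by
    rw [hz]
    field_simp
    ring_nf
    rw [Complex.I_sq]
    ring
  rw [hrw1, hrw2, hid, norm_div]
  have hnum : ‖(Complex.exp (-z) - (1 - z + z^2/2)) + z^3/2‖ ≤
      ‖z‖ ^ 3 * (2/9 + 1/2) := by
    calc ‖(Complex.exp (-z) - (1 - z + z^2/2)) + z^3/2‖
        ≤ ‖Complex.exp (-z) - (1 - z + z^2/2)‖ + ‖z^3/2‖ := by
          exact norm_add_le _ _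
      _ ≤ ‖z‖ ^ 3 * (2/9) + ‖z‖ ^ 3 / 2 := by
          gcongr
          rw [norm_div, norm_pow]
          norm_num
      _ = ‖z‖ ^ 3 * (2/9 + 1/2) := by ring
  have hzcube : ‖z‖ ^ 3 = |u| ^ 3 / κ ^ 3 := by
    rw [habsz, div_pow]
  have hdenpos : (0:ℝ) < ‖1 - z‖ := lt_of_lt_of_le h1zpos hab
  have step : ‖(Complex.exp (-z) - (1 - z + z^2/2)) + z^3/2‖ /
      ‖1 - z‖ ≤ (‖z‖ ^ 3 * (2/9 + 1/2)) / (1 - r) := by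
    apply div_le_div₀ (by positivity) hnum h1zpos hab
  refine step.trans ?_
  rw [hzcube]
  have hC : (2/9 + 1/2 : ℝ) / (1 - r) ≤ C2 κ θ := by
    rw [C2, ← hrdef]
    have h4 : (0:ℝ) < 1 - r/4 := by linarith
    have h5 : (1:ℝ) ≤ 1 / (1 - r/4) := by
      rw [le_div_iff₀ h4]; linarith
    have h7 : (0:ℝ) < 1 / (1 - r) := by positivity
    calc (2/9 + 1/2 : ℝ) / (1 - r) = (1 / (1 - r)) * (2/9 + 1/2) := by ring
      _ ≤ (1 / (1 - r)) * (1 / (1 - r/4) + 5/2) :=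
          mul_le_mul_of_nonneg_left (by linarith) h7.le
  calc |u| ^ 3 / κ ^ 3 * (2/9 + 1/2) / (1 - r)
      = ((2/9 + 1/2) / (1 - r)) * (|u| ^ 3 / κ ^ 3) := by ring
    _ ≤ C2 κ θ * (|u| ^ 3 / κ ^ 3) := by
        gcongr
    _ = C2 κ θ * |u| ^ 3 / κ ^ 3 := by ring
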